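/- In the seven-dimensional diplo-simplex Q, every two vertices that are not opposite are joined by an edge: for any x, y ∈ range v ∪ range (fun i => −v i) with x ≠ y and x ≠ −y, the segment from x to y is a face of Q, i.e. IsExtreme ℝ Q (segment ℝ x y). -/

import Mathlib

open Set

/-- A supported face of a convex hull of a finite set: points of the hull where a linear
functional attains its max lie in the hull of the max vertices. -/
lemma face_of_convexHull {E : Type*} [AddCommGroup E] [Module ℝ E]
    {S : Set E} (hS : S.Finite) (f : E →ₗ[ℝ] ℝ)
    {x y : E} (hx : x ∈ S) (hy : y ∈ S)
    (hle : ∀ s ∈ S, f s ≤ 1) (hfx : f x = 1) (hfy : f y = 1)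
    (hone : ∀ s ∈ S, f s = 1 → s = x ∨ s = y) :
    IsExtreme ℝ (convexHull ℝ S) (segment ℝ x y) := by
  have hQle : ∀ p ∈ convexHull ℝ S, f p ≤ 1 := fun p hp =>
    convexHull_min hle (convex_halfSpace_le (LinearMap.isLinear f) 1) hp
  have key : ∀ p ∈ convexHull ℝ S, f p = 1 → p ∈ segment ℝ x y := by
    intro p hp hfp
    rw [← hS.coe_toFinset, Finset.convexHull_eq] at hp
    obtain ⟨w, h0, h1, hcm⟩ := hp
    set t := hS.toFinset with ht
    have hzero : ∀ s ∈ t, w s * (1 - f s) = 0 := by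
      have hsum0 : ∑ s ∈ t, w s * (1 - f s) = 0 := by
        have hfp' : ∑ s ∈ t, w s * f s = 1 := by
          have : f (t.centerMass w id) = ∑ s ∈ t, w s * f s := by
            rw [Finset.centerMass_eq_of_sum_1 _ _ h1, map_sum]
            simp [smul_eq_mul]
          rw [hcm, hfp] at this
          exact this.symm
        have : ∑ s ∈ t, w s * (1 - f s) = (∑ s ∈ t, w s) - ∑ s ∈ t, w s * f s := by
          rw [← Finset.sum_sub_distrib]; congr 1; ext s; ring
        rw [this, h1, hfp']; ring
      intro s hs
      have := (Finset.sum_eq_zero_iff_of_nonneg (fun s hs => by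
        have hsS : s ∈ S := by rw [ht, Set.Finite.mem_toFinset] at hs; exact hs
        exact mul_nonneg (h0 s hs) (by linarith [hle s hsS]))).mp hsum0
      exact this s hs
    rw [← convexHull_pair]
    have : p = (t.filter (fun s => w s ≠ 0)).centerMass w id := by
      rw [Finset.centerMass_filter_ne_zero, hcm]
    rw [this]
    apply Finset.centerMass_mem_convexHull
    · intro s hs; exact h0 s (Finset.mem_filter.mp hs).1
    · rw [Finset.sum_filter_ne_zero, h1]; norm_num
    · intro s hs
      obtain ⟨hst, hwne⟩ := Finset.mem_filter.mp hs
      have hsS : s ∈ S := by rw [ht, Set.Finite.mem_toFinset] at hst; exact hst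
      have hfs : f s = 1 := by
        have := hzero s hst
        rcases mul_eq_zero.mp this with h | h
        · exact absurd h hwne
        · linarith
      rcases hone s hsS hfs with h | h <;> simp [h]
  constructor
  · rw [← convexHull_pair]
    exact convexHull_mono (by rintro z (rfl | rfl); exacts [hx, hy])
  · rintro x₁ hx₁ x₂ hx₂ p hpB hpo
    obtain ⟨c, d, hc, hd, hcd, rfl⟩ := hpo
    have hfp : f (c • x₁ + d • x₂) = 1 := by
      obtain ⟨a, b, ha, hb, hab, hab'⟩ := hpB
      rw [← hab']
      simp only [map_add, map_smul, smul_eq_mul, hfx, hfy]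
      linarith
    have h1 : f x₁ ≤ 1 := hQle _ hx₁
    have h2 : f x₂ ≤ 1 := hQle _ hx₂
    have heq : f x₁ = 1 ∧ f x₂ = 1 := by
      simp only [map_add, map_smul, smul_eq_mul] at hfp
      constructor <;> nlinarith
    exact key _ hx₁ heq.1

lemma exists_functional (v : Fin 8 → EuclideanSpace ℝ (Fin 7))
    (hv : AffineIndependent ℝ v) (hsum : ∑ i, v i = 0)
    (a : Fin 8 → ℝ) (ha : ∑ i, a i = 0) :
    ∃ f : EuclideanSpace ℝ (Fin 7) →ₗ[ℝ] ℝ, ∀ k, f (v k) = a k := by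
  have li : LinearIndependent ℝ (fun k : {k : Fin 8 // k ≠ 0} => v k - v 0) := by
    have := (affineIndependent_iff_linearIndependent_vsub ℝ v 0).mp hv
    simpa [vsub_eq_sub] using this
  have hcard : Fintype.card {k : Fin 8 // k ≠ (0 : Fin 8)} =
      Module.finrank ℝ (EuclideanSpace ℝ (Fin 7)) := by
    simp [finrank_euclideanSpace_fin]
  haveI : Nonempty {k : Fin 8 // k ≠ (0 : Fin 8)} := ⟨⟨1, by decide⟩⟩
  let b := basisOfLinearIndependentOfCardEqFinrank li hcard
  let f := b.constr ℝ (fun k => a k - a 0)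
  have hb : ∀ k : {k : Fin 8 // k ≠ (0 : Fin 8)}, f (v k - v 0) = a k - a 0 := by
    intro k
    have hbk : (v k - v 0) = b k := by
      simp [b, coe_basisOfLinearIndependentOfCardEqFinrank]
    rw [hbk]
    exact b.constr_basis ℝ _ k
  have hdiff : ∀ k : Fin 8, f (v k) - f (v 0) = a k - a 0 := by
    intro k
    by_cases hk : k = 0
    · simp [hk]
    · have := hb ⟨k, hk⟩
      simpa [map_sub] using this
  have h0 : f (v 0) = a 0 := by
    have h1 : ∑ k, (f (v k) - f (v 0)) = ∑ k, (a k - a 0) :=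
      Finset.sum_congr rfl (fun k _ => hdiff k)
    have h2 : ∑ k, f (v k) = 0 := by rw [← map_sum, hsum, map_zero]
    simp [Finset.sum_sub_distrib, h2, ha, Finset.card_univ] at h1
    linarith
  exact ⟨f, fun k => by have := hdiff k; linarith⟩

open Set in
/-- In the seven-dimensional diplo-simplex (the Delone polytope of `E7*`), every two
vertices that are not opposite are joined by an edge. -/
theorem stmt_12
    (v : Fin 8 → EuclideanSpace ℝ (Fin 7))
    (hv : AffineIndependent ℝ v)
    (hsum : ∑ i, v i = 0)
    (Q : Set (EuclideanSpace ℝ (Fin 7)))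
    (hQ : Q = convexHull ℝ (range v ∪ range (fun i => -v i))) :
    ∀ x ∈ range v ∪ range (fun i => -v i),
      ∀ y ∈ range v ∪ range (fun i => -v i),
        x ≠ y → x ≠ -y → IsExtreme ℝ Q (segment ℝ x y) := by
  subst hQ
  set S : Set (EuclideanSpace ℝ (Fin 7)) := range v ∪ range (fun i => -v i) with hSdef
  have hSfin : S.Finite := (finite_range v).union (finite_range _)
  intro x hx y hy hxy hxny
  have main : ∀ (a : Fin 8 → ℝ), (∑ k, a k = 0) →
      (∀ k, a k ≤ 1) → (∀ k, -1 ≤ a k) →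
      (∀ k, a k = 1 → v k = x ∨ v k = y) →
      (∀ k, a k = -1 → -v k = x ∨ -v k = y) →
      ((∃ i, v i = x ∧ a i = 1) ∨ (∃ i, -v i = x ∧ a i = -1)) →
      ((∃ j, v j = y ∧ a j = 1) ∨ (∃ j, -v j = y ∧ a j = -1)) →
      IsExtreme ℝ (convexHull ℝ S) (segment ℝ x y) := by
    intro a ha hub hlb he1 he2 hxx hyy
    obtain ⟨f, hf⟩ := exists_functional v hv hsum a ha
    have hfx : f x = 1 := by
      rcases hxx with ⟨i, hi, ha'⟩ | ⟨i, hi, ha'⟩ <;> rw [← hi] <;>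
        simp [hf, ha']
    have hfy : f y = 1 := by
      rcases hyy with ⟨j, hj, ha'⟩ | ⟨j, hj, ha'⟩ <;> rw [← hj] <;>
        simp [hf, ha']
    apply face_of_convexHull hSfin f hx hy _ hfx hfy
    · rintro s (⟨k, rfl⟩ | ⟨k, rfl⟩) h
      · exact he1 k (by rw [← hf k]; exact h)
      · refine he2 k ?_
        have hfk : f (-v k) = -a k := by simp [hf]
        simp only [hfk] at h
        linarith
    · rintro s (⟨k, rfl⟩ | ⟨k, rfl⟩)
      · rw [hf]; exact hub k
      · show f (-v k) ≤ 1
        rw [map_neg, hf]; linarith [hlb k]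
  rcases hx with ⟨i, rfl⟩ | ⟨i, hxi⟩ <;> rcases hy with ⟨j, rfl⟩ | ⟨j, hyj⟩
  · -- x = v i, y = v j
    have hij : i ≠ j := fun h => hxy (by rw [h])
    set a : Fin 8 → ℝ :=
      fun k => (if k = i then (4:ℝ)/3 else 0) + (if k = j then 4/3 else 0) - 1/3 with hadef
    have hai : a i = 1 := by norm_num [hadef, hij]
    have haj : a j = 1 := by norm_num [hadef, Ne.symm hij]
    have hao : ∀ k, k ≠ i → k ≠ j → a k = -(1/3) := by
      intro k h1 h2; norm_num [hadef, h1, h2]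
    apply main a
    · simp [hadef, Finset.sum_add_distrib, Finset.sum_sub_distrib,
        Finset.sum_ite_eq', Finset.card_univ]
      norm_num
    · intro k
      by_cases h1 : k = i
      · rw [h1, hai]
      by_cases h2 : k = j
      · rw [h2, haj]
      rw [hao k h1 h2]; norm_num
    · intro k
      by_cases h1 : k = i
      · rw [h1, hai]; norm_num
      by_cases h2 : k = j
      · rw [h2, haj]; norm_num
      rw [hao k h1 h2]; norm_num
    · intro k hk
      by_cases h1 : k = i
      · exact Or.inl (by rw [h1])
      by_cases h2 : k = j
      · exact Or.inr (by rw [h2])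
      rw [hao k h1 h2] at hk; norm_num at hk
    · intro k hk
      by_cases h1 : k = i
      · rw [h1, hai] at hk; norm_num at hk
      by_cases h2 : k = j
      · rw [h2, haj] at hk; norm_num at hk
      rw [hao k h1 h2] at hk; norm_num at hk
    · exact Or.inl ⟨i, rfl, hai⟩
    · exact Or.inl ⟨j, rfl, haj⟩
  · -- x = v i, y = -v j
    have hy' : y = -v j := hyj.symm
    subst hy'
    have hij : i ≠ j := by
      intro h; subst h; exact hxny (by simp)
    set a : Fin 8 → ℝ :=
      fun k => (if k = i then (1:ℝ) else 0) - (if k = j then 1 else 0) with hadef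
    have hai : a i = 1 := by norm_num [hadef, hij]
    have haj : a j = -1 := by norm_num [hadef, Ne.symm hij]
    have hao : ∀ k, k ≠ i → k ≠ j → a k = 0 := by
      intro k h1 h2; norm_num [hadef, h1, h2]
    apply main a
    · simp [hadef, Finset.sum_sub_distrib, Finset.sum_ite_eq']
    · intro k
      by_cases h1 : k = i
      · rw [h1, hai]
      by_cases h2 : k = j
      · rw [h2, haj]; norm_num
      rw [hao k h1 h2]; norm_num
    · intro k
      by_cases h1 : k = i
      · rw [h1, hai]; norm_num
      by_cases h2 : k = j
      · rw [h2, haj]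
      rw [hao k h1 h2]; norm_num
    · intro k hk
      by_cases h1 : k = i
      · exact Or.inl (by rw [h1])
      by_cases h2 : k = j
      · rw [h2, haj] at hk; norm_num at hk
      rw [hao k h1 h2] at hk; norm_num at hk
    · intro k hk
      by_cases h1 : k = i
      · rw [h1, hai] at hk; norm_num at hk
      by_cases h2 : k = j
      · exact Or.inr (by rw [h2])
      rw [hao k h1 h2] at hk; norm_num at hk
    · exact Or.inl ⟨i, rfl, hai⟩
    · exact Or.inr ⟨j, rfl, haj⟩
  · -- x = -v i, y = v j
    have hx' : x = -v i := hxi.symm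
    subst hx'
    have hij : i ≠ j := by
      intro h; subst h; exact hxny (by simp)
    set a : Fin 8 → ℝ :=
      fun k => (if k = j then (1:ℝ) else 0) - (if k = i then 1 else 0) with hadef
    have hai : a i = -1 := by norm_num [hadef, hij]
    have haj : a j = 1 := by norm_num [hadef, Ne.symm hij]
    have hao : ∀ k, k ≠ i → k ≠ j → a k = 0 := by
      intro k h1 h2; norm_num [hadef, h1, h2]
    apply main a
    · simp [hadef, Finset.sum_sub_distrib, Finset.sum_ite_eq']
    · intro k
      by_cases h1 : k = i
      · rw [h1, hai]; norm_num
      by_cases h2 : k = j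
      · rw [h2, haj]
      rw [hao k h1 h2]; norm_num
    · intro k
      by_cases h1 : k = i
      · rw [h1, hai]
      by_cases h2 : k = j
      · rw [h2, haj]; norm_num
      rw [hao k h1 h2]; norm_num
    · intro k hk
      by_cases h1 : k = i
      · rw [h1, hai] at hk; norm_num at hk
      by_cases h2 : k = j
      · exact Or.inr (by rw [h2])
      rw [hao k h1 h2] at hk; norm_num at hk
    · intro k hk
      by_cases h1 : k = i
      · exact Or.inl (by rw [h1])
      by_cases h2 : k = j
      · rw [h2, haj] at hk; norm_num at hk
      rw [hao k h1 h2] at hk; norm_num at hk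
    · exact Or.inr ⟨i, rfl, hai⟩
    · exact Or.inl ⟨j, rfl, haj⟩
  · -- x = -v i, y = -v j
    have hx' : x = -v i := hxi.symm
    have hy' : y = -v j := hyj.symm
    subst hx'; subst hy'
    have hij : i ≠ j := fun h => hxy (by rw [h])
    set a : Fin 8 → ℝ :=
      fun k => (1:ℝ)/3 - (if k = i then 4/3 else 0) - (if k = j then 4/3 else 0) with hadef
    have hai : a i = -1 := by norm_num [hadef, hij]
    have haj : a j = -1 := by norm_num [hadef, Ne.symm hij]
    have hao : ∀ k, k ≠ i → k ≠ j → a k = 1/3 := by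
      intro k h1 h2; norm_num [hadef, h1, h2]
    apply main a
    · simp [hadef, Finset.sum_sub_distrib, Finset.sum_ite_eq', Finset.card_univ]
      norm_num
    · intro k
      by_cases h1 : k = i
      · rw [h1, hai]; norm_num
      by_cases h2 : k = j
      · rw [h2, haj]; norm_num
      rw [hao k h1 h2]; norm_num
    · intro k
      by_cases h1 : k = i
      · rw [h1, hai]
      by_cases h2 : k = j
      · rw [h2, haj]
      rw [hao k h1 h2]; norm_num
    · intro k hk
      by_cases h1 : k = i
      · rw [h1, hai] at hk; norm_num at hk
      by_cases h2 : k = j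
      · rw [h2, haj] at hk; norm_num at hk
      rw [hao k h1 h2] at hk; norm_num at hk
    · intro k hk
      by_cases h1 : k = i
      · exact Or.inl (by rw [h1])
      by_cases h2 : k = j
      · exact Or.inr (by rw [h2])
      rw [hao k h1 h2] at hk; norm_num at hk
    · exact Or.inr ⟨i, rfl, hai⟩
    · exact Or.inr ⟨j, rfl, haj⟩
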